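/- arXiv:1608.04763 — 3 statements merged into one kernel-verified Lean document; each statement's English description precedes it below -/
import Mathlib

section
/- Fix real matrices A (n×n) and B (n×m). For a symmetric positive semidefinite n×n matrix Q and a symmetric positive definite m×m matrix R, let P_T(Q,R) be defined by the Riccati iteration P_0(Q,R) = 0 and P_{k+1}(Q,R) = AᵀP_k(Q,R)A − AᵀP_k(Q,R)B(BᵀP_k(Q,R)B+R)⁻¹BᵀP_k(Q,R)A + Q. Let δ ∈ [0,1) and let Q, Q′ be symmetric positive semidefinite n×n matrices and R, R′ symmetric positive definite m×m matrices with Q′ ⪯ (1+δ)Q and R′ ⪯ (1+δ)R. Then for every T ∈ ℕ, (1−δ)·P_T(Q′,R′) ⪯ P_T(Q,R). -/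
open Matrix

/-- The finite-horizon Riccati iteration with `P 0 = 0` and
`P (k+1) = AᵀP_kA − AᵀP_kB(BᵀP_kB+R)⁻¹BᵀP_kA + Q`. -/
noncomputable def riccati {n m : ℕ} (A : Matrix (Fin n) (Fin n) ℝ)
    (B : Matrix (Fin n) (Fin m) ℝ) (Q : Matrix (Fin n) (Fin n) ℝ)
    (R : Matrix (Fin m) (Fin m) ℝ) : ℕ → Matrix (Fin n) (Fin n) ℝ
  | 0 => 0
  | k + 1 =>
      Aᵀ * riccati A B Q R k * A -
        Aᵀ * riccati A B Q R k * B * (Bᵀ * riccati A B Q R k * B + R)⁻¹ *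
          Bᵀ * riccati A B Q R k * A + Q

/-- The Loewner order on real square matrices: `X ⪯ Y` iff `Y − X` is positive semidefinite. -/
def loewnerLE {n : ℕ} (X Y : Matrix (Fin n) (Fin n) ℝ) : Prop := (Y - X).PosSemidef

namespace RiccatiAux

variable {n m k : ℕ}

lemma psd_smul {c : ℝ} (hc : 0 ≤ c) {M : Matrix (Fin n) (Fin n) ℝ} (hM : M.PosSemidef) :
    (c • M).PosSemidef := by
  constructor
  · unfold Matrix.IsHermitian
    rw [conjTranspose_smul, hM.1.eq]
    simp
  · intro x
    exact (hM.smul hc).2 x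

lemma pd_smul {c : ℝ} (hc : 0 < c) {M : Matrix (Fin n) (Fin n) ℝ} (hM : M.PosDef) :
    (c • M).PosDef := by
  constructor
  · unfold Matrix.IsHermitian
    rw [conjTranspose_smul, hM.1.eq]
    simp
  · intro x hx
    exact (hM.smul hc).2 hx

lemma psd_conj {M : Matrix (Fin n) (Fin n) ℝ} (hM : M.PosSemidef)
    (X : Matrix (Fin n) (Fin k) ℝ) : (Xᵀ * M * X).PosSemidef := by
  simpa [conjTranspose_eq_transpose_of_trivial] using hM.conjTranspose_mul_mul_same X

lemma lo_trans {X Y Z : Matrix (Fin n) (Fin n) ℝ} (h1 : loewnerLE X Y) (h2 : loewnerLE Y Z) :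
    loewnerLE X Z := by
  have := h2.add h1
  rwa [loewnerLE, ← sub_add_sub_cancel Z Y X]

lemma lo_add {X Y X' Y' : Matrix (Fin n) (Fin n) ℝ} (h1 : loewnerLE X Y)
    (h2 : loewnerLE X' Y') : loewnerLE (X + X') (Y + Y') := by
  have := h1.add h2
  rwa [loewnerLE, add_sub_add_comm]

lemma lo_conj {X Y : Matrix (Fin n) (Fin n) ℝ} (h : loewnerLE X Y)
    (M : Matrix (Fin n) (Fin k) ℝ) : loewnerLE (Mᵀ * X * M) (Mᵀ * Y * M) := by
  have := psd_conj h M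
  rwa [loewnerLE, ← Matrix.sub_mul, ← Matrix.mul_sub]

lemma lo_smul {c : ℝ} (hc : 0 ≤ c) {X Y : Matrix (Fin n) (Fin n) ℝ} (h : loewnerLE X Y) :
    loewnerLE (c • X) (c • Y) := by
  have := psd_smul hc h
  rwa [loewnerLE, ← smul_sub]

variable (A : Matrix (Fin n) (Fin n) ℝ) (B : Matrix (Fin n) (Fin m) ℝ)

/-- One step of the Riccati iteration. -/
noncomputable def step (P Q : Matrix (Fin n) (Fin n) ℝ) (R : Matrix (Fin m) (Fin m) ℝ) :
    Matrix (Fin n) (Fin n) ℝ :=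
  Aᵀ * P * A - Aᵀ * P * B * (Bᵀ * P * B + R)⁻¹ * Bᵀ * P * A + Q

lemma riccati_succ (Q : Matrix (Fin n) (Fin n) ℝ) (R : Matrix (Fin m) (Fin m) ℝ) (T : ℕ) :
    riccati A B Q R (T + 1) = step A B (riccati A B Q R T) Q R := rfl

variable {P Q : Matrix (Fin n) (Fin n) ℝ} {R : Matrix (Fin m) (Fin m) ℝ}

lemma S_pd (hP : P.PosSemidef) (hR : R.PosDef) : (Bᵀ * P * B + R).PosDef :=
  Matrix.PosDef.posSemidef_add (psd_conj hP B) hR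

/-- Completion of squares / variational identity for the Riccati step. -/
lemma key (hP : P.PosSemidef) (hR : R.PosDef) (K' : Matrix (Fin m) (Fin n) ℝ) :
    (A - B * K')ᵀ * P * (A - B * K') + K'ᵀ * R * K' + Q - step A B P Q R
      = (K' - (Bᵀ * P * B + R)⁻¹ * (Bᵀ * P * A))ᵀ * (Bᵀ * P * B + R)
          * (K' - (Bᵀ * P * B + R)⁻¹ * (Bᵀ * P * A)) := by
  have hSpd : (Bᵀ * P * B + R).PosDef := S_pd B hP hR
  have hPt : Pᵀ = P := by
    simpa [conjTranspose_eq_transpose_of_trivial] using hP.isHermitian.eq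
  unfold step
  obtain ⟨S, hSdef⟩ : ∃ S, S = Bᵀ * P * B + R := ⟨_, rfl⟩
  rw [← hSdef] at hSpd ⊢
  have hdet : IsUnit S.det := hSpd.det_pos.ne'.isUnit
  have hS1 : S * S⁻¹ = 1 := S.mul_nonsing_inv hdet
  have hS2 : S⁻¹ * S = 1 := S.nonsing_inv_mul hdet
  have hSt : Sᵀ = S := by
    simpa [conjTranspose_eq_transpose_of_trivial] using hSpd.isHermitian.eq
  have hSit : (S⁻¹)ᵀ = S⁻¹ := by rw [transpose_nonsing_inv, hSt]
  have c1 : ∀ (X : Matrix (Fin m) (Fin n) ℝ), S * (S⁻¹ * X) = X := fun X => by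
    rw [← Matrix.mul_assoc, hS1, Matrix.one_mul]
  have c2 : ∀ (X : Matrix (Fin m) (Fin n) ℝ), S⁻¹ * (S * X) = X := fun X => by
    rw [← Matrix.mul_assoc, hS2, Matrix.one_mul]
  have hexp : ∀ (X : Matrix (Fin m) (Fin n) ℝ), Bᵀ * (P * (B * X)) = S * X - R * X :=
    fun X => by
      rw [← Matrix.mul_assoc, ← Matrix.mul_assoc, ← Matrix.sub_mul]
      congr 1
      rw [hSdef, add_sub_cancel_right]
  simp only [transpose_sub, transpose_mul, transpose_transpose, hPt, hSt, hSit,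
    Matrix.sub_mul, Matrix.mul_sub, Matrix.mul_assoc, c1, c2, hexp]
  abel

/-- The Riccati step is attained by the optimal gain. -/
lemma step_eq (hP : P.PosSemidef) (hR : R.PosDef) :
    step A B P Q R
      = (A - B * ((Bᵀ * P * B + R)⁻¹ * (Bᵀ * P * A)))ᵀ * P
          * (A - B * ((Bᵀ * P * B + R)⁻¹ * (Bᵀ * P * A)))
        + ((Bᵀ * P * B + R)⁻¹ * (Bᵀ * P * A))ᵀ * R * ((Bᵀ * P * B + R)⁻¹ * (Bᵀ * P * A))
        + Q := by
  have h := key A B (Q := Q) hP hR ((Bᵀ * P * B + R)⁻¹ * (Bᵀ * P * A))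
  rw [sub_self] at h
  simp only [Matrix.zero_mul, Matrix.mul_zero] at h
  exact (sub_eq_zero.mp h).symm

lemma step_psd (hP : P.PosSemidef) (hQ : Q.PosSemidef) (hR : R.PosDef) :
    (step A B P Q R).PosSemidef := by
  rw [step_eq A B hP hR]
  exact ((psd_conj hP _).add (psd_conj hR.posSemidef _)).add hQ

lemma step_mono {P' Q' : Matrix (Fin n) (Fin n) ℝ} {R' : Matrix (Fin m) (Fin m) ℝ}
    (hP : P.PosSemidef) (hP' : P'.PosSemidef) (hR : R.PosDef) (hR' : R'.PosDef)
    (hPP : loewnerLE P P') (hQQ : loewnerLE Q Q') (hRR : loewnerLE R R') :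
    loewnerLE (step A B P Q R) (step A B P' Q' R') := by
  set K' := (Bᵀ * P' * B + R')⁻¹ * (Bᵀ * P' * A) with hK'
  have h1 : loewnerLE (step A B P Q R)
      ((A - B * K')ᵀ * P * (A - B * K') + K'ᵀ * R * K' + Q) := by
    rw [loewnerLE, key A B hP hR K']
    exact psd_conj (S_pd B hP hR).posSemidef _
  have h2 : loewnerLE ((A - B * K')ᵀ * P * (A - B * K') + K'ᵀ * R * K' + Q)
      ((A - B * K')ᵀ * P' * (A - B * K') + K'ᵀ * R' * K' + Q') :=
    lo_add (lo_add (lo_conj hPP _) (lo_conj hRR _)) hQQ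
  have h3 : (A - B * K')ᵀ * P' * (A - B * K') + K'ᵀ * R' * K' + Q' = step A B P' Q' R' :=
    (step_eq A B hP' hR').symm
  exact lo_trans h1 (h3 ▸ h2)

lemma step_homog {c : ℝ} (hc : 0 < c) (hP : P.PosSemidef) (hR : R.PosDef) :
    step A B (c • P) (c • Q) (c • R) = c • step A B P Q R := by
  have hS : Bᵀ * (c • P) * B + c • R = c • (Bᵀ * P * B + R) := by
    rw [Matrix.mul_smul, Matrix.smul_mul, smul_add]
  have hinv : (c • (Bᵀ * P * B + R))⁻¹ = c⁻¹ • (Bᵀ * P * B + R)⁻¹ := by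
    have : Invertible c := invertibleOfNonzero hc.ne'
    rw [Matrix.inv_smul (A := Bᵀ * P * B + R) c (S_pd B hP hR).det_pos.ne'.isUnit,
      invOf_eq_inv]
  unfold step
  rw [hS, hinv]
  simp only [Matrix.mul_smul, Matrix.smul_mul, smul_smul, smul_sub, smul_add]
  rw [show c * (c⁻¹ * c) = c by field_simp]

lemma ric_psd (hQ : Q.PosSemidef) (hR : R.PosDef) :
    ∀ T, (riccati A B Q R T).PosSemidef
  | 0 => Matrix.PosSemidef.zero
  | T + 1 => by
    rw [riccati_succ]
    exact step_psd A B (ric_psd hQ hR T) hQ hR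

lemma ric_homog {c : ℝ} (hc : 0 < c) (hQ : Q.PosSemidef) (hR : R.PosDef) :
    ∀ T, riccati A B (c • Q) (c • R) T = c • riccati A B Q R T
  | 0 => by simp [riccati]
  | T + 1 => by
    rw [riccati_succ, riccati_succ, ric_homog hc hQ hR T,
      step_homog A B hc (ric_psd A B hQ hR T) hR]

lemma ric_mono {Q' : Matrix (Fin n) (Fin n) ℝ} {R' : Matrix (Fin m) (Fin m) ℝ}
    (hQ : Q.PosSemidef) (hQ' : Q'.PosSemidef) (hR : R.PosDef) (hR' : R'.PosDef)
    (hQQ : loewnerLE Q Q') (hRR : loewnerLE R R') :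
    ∀ T, loewnerLE (riccati A B Q R T) (riccati A B Q' R' T)
  | 0 => by simpa [riccati, loewnerLE] using Matrix.PosSemidef.zero
  | T + 1 => by
    rw [riccati_succ, riccati_succ]
    exact step_mono A B (ric_psd A B hQ hR T) (ric_psd A B hQ' hR' T) hR hR'
      (ric_mono hQ hQ' hR hR' hQQ hRR T) hQQ hRR

end RiccatiAux

/-- Quantitative perturbation bound for the Riccati recursion: if `Q′ ⪯ (1+δ)Q` and
`R′ ⪯ (1+δ)R` with `δ ∈ [0,1)`, then `(1−δ)·P_T(Q′,R′) ⪯ P_T(Q,R)` for every `T`. -/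
theorem riccati_perturbation_bound {n m : ℕ}
    (A : Matrix (Fin n) (Fin n) ℝ) (B : Matrix (Fin n) (Fin m) ℝ)
    (δ : ℝ) (hδ0 : 0 ≤ δ) (hδ1 : δ < 1)
    (Q Q' : Matrix (Fin n) (Fin n) ℝ) (R R' : Matrix (Fin m) (Fin m) ℝ)
    (hQ : Q.PosSemidef) (hQ' : Q'.PosSemidef) (hR : R.PosDef) (hR' : R'.PosDef)
    (hQle : loewnerLE Q' ((1 + δ) • Q)) (hRle : loewnerLE R' ((1 + δ) • R)) :
    ∀ T : ℕ, loewnerLE ((1 - δ) • riccati A B Q' R' T) (riccati A B Q R T) := by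
  intro T
  have hc : (0:ℝ) < 1 + δ := by linarith
  have h1 : loewnerLE (riccati A B Q' R' T) (riccati A B ((1+δ) • Q) ((1+δ) • R) T) :=
    RiccatiAux.ric_mono A B hQ' (RiccatiAux.psd_smul hc.le hQ) hR'
      (RiccatiAux.pd_smul hc hR) hQle hRle T
  rw [RiccatiAux.ric_homog A B hc hQ hR T] at h1
  have h2 : loewnerLE ((1 - δ) • riccati A B Q' R' T)
      (((1 - δ) * (1 + δ)) • riccati A B Q R T) := by
    have := RiccatiAux.lo_smul (by linarith : (0:ℝ) ≤ 1 - δ) h1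
    rwa [smul_smul] at this
  have h3 : loewnerLE (((1 - δ) * (1 + δ)) • riccati A B Q R T) (riccati A B Q R T) := by
    rw [loewnerLE]
    have heq : riccati A B Q R T - ((1 - δ) * (1 + δ)) • riccati A B Q R T
        = (δ ^ 2) • riccati A B Q R T := by
      rw [show riccati A B Q R T - ((1 - δ) * (1 + δ)) • riccati A B Q R T
          = ((1 : ℝ) - (1 - δ) * (1 + δ)) • riccati A B Q R T by
        rw [sub_smul, one_smul]]
      congr 1
      ring
    rw [heq]
    exact RiccatiAux.psd_smul (sq_nonneg δ) (RiccatiAux.ric_psd A B hQ hR T)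
  exact RiccatiAux.lo_trans h2 h3
end

section
/- Consider the time-varying MPC setup: fix real matrices A (n×n), B (n×m), a horizon T ≥ 1, a real δ ∈ [0,1), and sequences (Q_t)_{t∈ℕ} of symmetric positive definite n×n matrices and (R_t)_{t∈ℕ} of symmetric positive definite m×m matrices satisfying (1−δ)Q_t ⪯ Q_{t+1} ⪯ (1+δ)Q_t and (1−δ)R_t ⪯ R_{t+1} ⪯ (1+δ)R_t for all t. For weights (Q,R) let P_k(Q,R) be the Riccati iterates with P_0 = 0 and P_{k+1} = AᵀP_kA − AᵀP_kB(BᵀP_kB+R)⁻¹BᵀP_kA + Q, and let the MPC closed-loop trajectory from x_0 be x_{t+1} = Ax_t + Bû_t with û_t = −(BᵀP_{T−1}(Q_t,R_t)B+R_t)⁻¹BᵀP_{T−1}(Q_t,R_t)A x_t. Suppose α > 1 satisfies P_T(Q_t,R_t) ⪯ α·P_{T−1}(Q_t,R_t) for all t. Then for every t ∈ ℕ, the realized stage cost satisfies x_tᵀQ_tx_t + û_tᵀR_tû_t ≤ x_tᵀP_T(Q_t,R_t)x_t − ((1−δ)/α)·x_{t+1}ᵀP_T(Q_{t+1},R_{t+1})x_{t+1}.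 -/
open Matrix

section Helpers
variable {n m : ℕ}

private lemma psd_smul {c : ℝ} (hc : 0 ≤ c) {M : Matrix (Fin n) (Fin n) ℝ}
    (hM : M.PosSemidef) : (c • M).PosSemidef := by
  refine Matrix.PosSemidef.of_dotProduct_mulVec_nonneg ?_ fun v => ?_
  · unfold Matrix.IsHermitian
    rw [conjTranspose_smul]
    simp [← conjTranspose_eq_transpose_of_trivial, hM.1.eq]
  · rw [smul_mulVec, dotProduct_smul, smul_eq_mul]
    exact mul_nonneg hc (hM.dotProduct_mulVec_nonneg v)

private lemma pd_smul {c : ℝ} (hc : 0 < c) {M : Matrix (Fin n) (Fin n) ℝ}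
    (hM : M.PosDef) : (c • M).PosDef := by
  refine Matrix.PosDef.of_dotProduct_mulVec_pos ?_ fun v hv => ?_
  · unfold Matrix.IsHermitian
    rw [conjTranspose_smul]
    simp [← conjTranspose_eq_transpose_of_trivial, hM.1.eq]
  · rw [smul_mulVec, dotProduct_smul, smul_eq_mul]
    exact mul_pos hc (hM.dotProduct_mulVec_pos hv)

private lemma psd_conj {p q : ℕ} {N : Matrix (Fin p) (Fin p) ℝ} (hN : N.PosSemidef)
    (M : Matrix (Fin p) (Fin q) ℝ) : (Mᵀ * N * M).PosSemidef := by
  have := hN.conjTranspose_mul_mul_same M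
  rwa [conjTranspose_eq_transpose_of_trivial] at this

private lemma loewner_quad {X Y : Matrix (Fin n) (Fin n) ℝ} (h : loewnerLE X Y) (v : Fin n → ℝ) :
    v ⬝ᵥ (X *ᵥ v) ≤ v ⬝ᵥ (Y *ᵥ v) := by
  have := Matrix.PosSemidef.dotProduct_mulVec_nonneg h v
  simp only [star_trivial, sub_mulVec, dotProduct_sub] at this
  linarith

private lemma loewner_trans {X Y Z : Matrix (Fin n) (Fin n) ℝ}
    (h1 : loewnerLE X Y) (h2 : loewnerLE Y Z) : loewnerLE X Z := by
  have := Matrix.PosSemidef.add h2 h1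
  rwa [sub_add_sub_cancel] at this

private lemma loewner_smul {X Y : Matrix (Fin n) (Fin n) ℝ} {c : ℝ}
    (h : loewnerLE X Y) (hc : 0 ≤ c) : loewnerLE (c • X) (c • Y) := by
  unfold loewnerLE
  rw [← smul_sub]
  exact psd_smul hc h



private lemma G_expand (A : Matrix (Fin n) (Fin n) ℝ) (B : Matrix (Fin n) (Fin m) ℝ)
    (Q P : Matrix (Fin n) (Fin n) ℝ) (R : Matrix (Fin m) (Fin m) ℝ)
    (K K' : Matrix (Fin m) (Fin n) ℝ)
    (h1 : Bᵀ * P * (A - B * K) = R * K)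
    (h2 : (A - B * K)ᵀ * P * B = Kᵀ * R) :
    Q + K'ᵀ * R * K' + (A - B * K')ᵀ * P * (A - B * K') =
      (Q + Kᵀ * R * K + (A - B * K)ᵀ * P * (A - B * K)) +
        (K' - K)ᵀ * (Bᵀ * P * B + R) * (K' - K) := by
  have key : Q + K'ᵀ * R * K' + (A - B * K')ᵀ * P * (A - B * K') =
      ((Q + Kᵀ * R * K + (A - B * K)ᵀ * P * (A - B * K)) +
        (K' - K)ᵀ * (Bᵀ * P * B + R) * (K' - K))
      - (K' - K)ᵀ * (Bᵀ * P * (A - B * K) - R * K)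
      - ((A - B * K)ᵀ * P * B - Kᵀ * R) * (K' - K) := by
    simp only [transpose_sub, transpose_mul, transpose_transpose, Matrix.sub_mul, Matrix.mul_sub,
      Matrix.add_mul, Matrix.mul_add, Matrix.mul_assoc]
    abel
  rw [key, h1, h2]
  simp

private lemma F_as_G_aux (A : Matrix (Fin n) (Fin n) ℝ) (B : Matrix (Fin n) (Fin m) ℝ)
    (Q P : Matrix (Fin n) (Fin n) ℝ) (R : Matrix (Fin m) (Fin m) ℝ)
    (S' : Matrix (Fin m) (Fin m) ℝ) (K : Matrix (Fin m) (Fin n) ℝ)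
    (h2 : (A - B * K)ᵀ * P * B = Kᵀ * R)
    (hKt : Kᵀ = Aᵀ * P * B * S') :
    Aᵀ * P * A - Aᵀ * P * B * S' * Bᵀ * P * A + Q =
      Q + Kᵀ * R * K + (A - B * K)ᵀ * P * (A - B * K) := by
  have key : Q + Kᵀ * R * K + (A - B * K)ᵀ * P * (A - B * K) =
      (Aᵀ * P * A - Aᵀ * P * B * S' * Bᵀ * P * A + Q)
        - ((A - B * K)ᵀ * P * B - Kᵀ * R) * K
        - (Kᵀ - Aᵀ * P * B * S') * (Bᵀ * P * A) := by
    simp only [transpose_sub, transpose_mul, transpose_transpose, Matrix.sub_mul, Matrix.mul_sub,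
      Matrix.add_mul, Matrix.mul_add, Matrix.mul_assoc]
    abel
  rw [key, h2, hKt]
  simp

private lemma gain_facts (A : Matrix (Fin n) (Fin n) ℝ) (B : Matrix (Fin n) (Fin m) ℝ)
    {P : Matrix (Fin n) (Fin n) ℝ} {R : Matrix (Fin m) (Fin m) ℝ}
    (hP : P.PosSemidef) (hR : R.PosDef) :
    Bᵀ * P * (A - B * ((Bᵀ * P * B + R)⁻¹ * Bᵀ * P * A)) =
        R * ((Bᵀ * P * B + R)⁻¹ * Bᵀ * P * A) ∧
    (A - B * ((Bᵀ * P * B + R)⁻¹ * Bᵀ * P * A))ᵀ * P * B =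
        ((Bᵀ * P * B + R)⁻¹ * Bᵀ * P * A)ᵀ * R ∧
    ((Bᵀ * P * B + R)⁻¹ * Bᵀ * P * A)ᵀ = Aᵀ * P * B * (Bᵀ * P * B + R)⁻¹ := by
  have hPt : Pᵀ = P := by
    rw [← conjTranspose_eq_transpose_of_trivial]; exact hP.1
  have hRt : Rᵀ = R := by
    rw [← conjTranspose_eq_transpose_of_trivial]; exact hR.1
  have hSpd : (Bᵀ * P * B + R).PosDef := Matrix.PosDef.posSemidef_add (psd_conj hP B) hR
  have hdet : IsUnit (Bᵀ * P * B + R).det := (Matrix.isUnit_iff_isUnit_det _).mp hSpd.isUnit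
  have hSt : (Bᵀ * P * B + R)ᵀ = Bᵀ * P * B + R := by
    rw [← conjTranspose_eq_transpose_of_trivial]; exact hSpd.1
  have hSinvt : ((Bᵀ * P * B + R)⁻¹)ᵀ = (Bᵀ * P * B + R)⁻¹ := by
    rw [Matrix.transpose_nonsing_inv, hSt]
  have hKt : ((Bᵀ * P * B + R)⁻¹ * Bᵀ * P * A)ᵀ = Aᵀ * P * B * (Bᵀ * P * B + R)⁻¹ := by
    have hSinvt' : ((Bᵀ * (P * B) + R)⁻¹)ᵀ = (Bᵀ * (P * B) + R)⁻¹ := by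
      rw [← Matrix.mul_assoc]; exact hSinvt
    simp only [transpose_mul, transpose_transpose, hPt, Matrix.mul_assoc, hSinvt']
  set S := Bᵀ * P * B + R with hSdef
  set K := S⁻¹ * Bᵀ * P * A with hKdef
  have hSK : S * K = Bᵀ * P * A := by
    rw [hKdef, ← Matrix.mul_assoc, ← Matrix.mul_assoc, ← Matrix.mul_assoc,
      Matrix.mul_nonsing_inv _ hdet, Matrix.one_mul]
  have e : (Bᵀ * P * B) * K + R * K = Bᵀ * P * A := by
    rw [← Matrix.add_mul]; exact hSK
  have h1 : Bᵀ * P * (A - B * K) = R * K := by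
    rw [Matrix.mul_sub, ← Matrix.mul_assoc, sub_eq_iff_eq_add']
    exact e.symm
  have h2 : (A - B * K)ᵀ * P * B = Kᵀ * R := by
    have := congrArg Matrix.transpose h1
    simp only [transpose_mul, transpose_transpose, hPt, hRt, ← Matrix.mul_assoc] at this
    exact this
  exact ⟨h1, h2, hKt⟩

private lemma riccati_succ (A : Matrix (Fin n) (Fin n) ℝ) (B : Matrix (Fin n) (Fin m) ℝ)
    (Q : Matrix (Fin n) (Fin n) ℝ) (R : Matrix (Fin m) (Fin m) ℝ) {k : ℕ}
    (hP : (riccati A B Q R k).PosSemidef) (hR : R.PosDef) :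
    riccati A B Q R (k + 1) =
      Q + ((Bᵀ * riccati A B Q R k * B + R)⁻¹ * Bᵀ * riccati A B Q R k * A)ᵀ * R *
            ((Bᵀ * riccati A B Q R k * B + R)⁻¹ * Bᵀ * riccati A B Q R k * A) +
          (A - B * ((Bᵀ * riccati A B Q R k * B + R)⁻¹ * Bᵀ * riccati A B Q R k * A))ᵀ *
            riccati A B Q R k *
            (A - B * ((Bᵀ * riccati A B Q R k * B + R)⁻¹ * Bᵀ * riccati A B Q R k * A)) := by
  obtain ⟨h1, h2, hKt⟩ := gain_facts A B hP hR
  rw [show riccati A B Q R (k + 1) =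
      Aᵀ * riccati A B Q R k * A -
        Aᵀ * riccati A B Q R k * B * (Bᵀ * riccati A B Q R k * B + R)⁻¹ *
          Bᵀ * riccati A B Q R k * A + Q from rfl]
  exact F_as_G_aux A B Q (riccati A B Q R k) R _ _ h2 hKt

private lemma riccati_psd (A : Matrix (Fin n) (Fin n) ℝ) (B : Matrix (Fin n) (Fin m) ℝ)
    {Q : Matrix (Fin n) (Fin n) ℝ} {R : Matrix (Fin m) (Fin m) ℝ}
    (hQ : Q.PosSemidef) (hR : R.PosDef) : ∀ k, (riccati A B Q R k).PosSemidef
  | 0 => by rw [show riccati A B Q R 0 = 0 from rfl]; exact .zero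
  | k + 1 => by
    have ih := riccati_psd A B hQ hR k
    rw [riccati_succ A B Q R ih hR]
    exact (hQ.add (psd_conj hR.posSemidef _)).add (psd_conj ih _)

private lemma riccati_mono (A : Matrix (Fin n) (Fin n) ℝ) (B : Matrix (Fin n) (Fin m) ℝ)
    {Q Q' : Matrix (Fin n) (Fin n) ℝ} {R R' : Matrix (Fin m) (Fin m) ℝ}
    (hQ : Q.PosSemidef) (hQ' : Q'.PosSemidef) (hR : R.PosDef) (hR' : R'.PosDef)
    (hQQ : loewnerLE Q Q') (hRR : loewnerLE R R') :
    ∀ k, loewnerLE (riccati A B Q R k) (riccati A B Q' R' k)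
  | 0 => by
    rw [show riccati A B Q R 0 = 0 from rfl, show riccati A B Q' R' 0 = 0 from rfl]
    unfold loewnerLE
    rw [sub_zero]
    exact .zero
  | k + 1 => by
    have hP := riccati_psd A B hQ hR k
    have hP' := riccati_psd A B hQ' hR' k
    have ih := riccati_mono A B hQ hQ' hR hR' hQQ hRR k
    have hSpd : (Bᵀ * riccati A B Q R k * B + R).PosDef :=
      Matrix.PosDef.posSemidef_add (psd_conj hP B) hR
    obtain ⟨h1, h2, _⟩ := gain_facts A B hP hR
    have e1 := riccati_succ A B Q R hP hR
    have e2 := riccati_succ A B Q' R' hP' hR'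
    set P := riccati A B Q R k
    set P' := riccati A B Q' R' k
    set K := (Bᵀ * P * B + R)⁻¹ * Bᵀ * P * A with hKdef
    set K' := (Bᵀ * P' * B + R')⁻¹ * Bᵀ * P' * A with hK'def
    have step1 : loewnerLE (riccati A B Q R (k + 1))
        (Q + K'ᵀ * R * K' + (A - B * K')ᵀ * P * (A - B * K')) := by
      rw [e1]
      unfold loewnerLE
      rw [G_expand A B Q P R K K' h1 h2, add_sub_cancel_left]
      exact psd_conj hSpd.posSemidef (K' - K)
    have step2 : loewnerLE (Q + K'ᵀ * R * K' + (A - B * K')ᵀ * P * (A - B * K'))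
        (riccati A B Q' R' (k + 1)) := by
      rw [e2]
      unfold loewnerLE
      have iddiff : (Q' + K'ᵀ * R' * K' + (A - B * K')ᵀ * P' * (A - B * K')) -
          (Q + K'ᵀ * R * K' + (A - B * K')ᵀ * P * (A - B * K')) =
          (Q' - Q) + K'ᵀ * (R' - R) * K' + (A - B * K')ᵀ * (P' - P) * (A - B * K') := by
        simp only [transpose_sub, transpose_mul, transpose_transpose, Matrix.sub_mul,
          Matrix.mul_sub, Matrix.add_mul, Matrix.mul_add, Matrix.mul_assoc]
        abel
      rw [iddiff]
      exact (hQQ.add (psd_conj hRR K')).add (psd_conj ih _)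
    exact loewner_trans step1 step2

private lemma riccati_smul (A : Matrix (Fin n) (Fin n) ℝ) (B : Matrix (Fin n) (Fin m) ℝ)
    {Q : Matrix (Fin n) (Fin n) ℝ} {R : Matrix (Fin m) (Fin m) ℝ}
    (hQ : Q.PosSemidef) (hR : R.PosDef) {c : ℝ} (hc : 0 < c) :
    ∀ k, riccati A B (c • Q) (c • R) k = c • riccati A B Q R k
  | 0 => by
    rw [show riccati A B (c • Q) (c • R) 0 = 0 from rfl,
      show riccati A B Q R 0 = 0 from rfl, smul_zero]
  | k + 1 => by
    have ih := riccati_smul A B hQ hR hc k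
    have hP := riccati_psd A B hQ hR k
    have hSpd : (Bᵀ * riccati A B Q R k * B + R).PosDef :=
      Matrix.PosDef.posSemidef_add (psd_conj hP B) hR
    have hdet : IsUnit (Bᵀ * riccati A B Q R k * B + R).det :=
      (Matrix.isUnit_iff_isUnit_det _).mp hSpd.isUnit
    have : Invertible c := invertibleOfNonzero hc.ne'
    rw [show riccati A B (c • Q) (c • R) (k + 1) =
        Aᵀ * riccati A B (c • Q) (c • R) k * A -
          Aᵀ * riccati A B (c • Q) (c • R) k * B *
            (Bᵀ * riccati A B (c • Q) (c • R) k * B + c • R)⁻¹ *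
            Bᵀ * riccati A B (c • Q) (c • R) k * A + c • Q from rfl, ih]
    rw [show riccati A B Q R (k + 1) =
        Aᵀ * riccati A B Q R k * A -
          Aᵀ * riccati A B Q R k * B * (Bᵀ * riccati A B Q R k * B + R)⁻¹ *
            Bᵀ * riccati A B Q R k * A + Q from rfl]
    set P := riccati A B Q R k with hPdef
    have hsm : Bᵀ * (c • P) * B + c • R = c • (Bᵀ * P * B + R) := by
      rw [Matrix.mul_smul, Matrix.smul_mul, smul_add]
    have hinv : (c • (Bᵀ * P * B + R))⁻¹ = c⁻¹ • (Bᵀ * P * B + R)⁻¹ := by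
      refine Matrix.inv_eq_left_inv ?_
      rw [Matrix.smul_mul, Matrix.mul_smul, smul_smul, inv_mul_cancel₀ hc.ne',
        Matrix.nonsing_inv_mul _ hdet, one_smul]
    rw [hsm, hinv]
    simp only [Matrix.mul_smul, Matrix.smul_mul, smul_smul, smul_add, smul_sub]
    congr 2
    · rw [inv_mul_cancel₀ hc.ne', mul_one]

private lemma quad_conj {p q : ℕ} (M : Matrix (Fin p) (Fin q) ℝ) (N : Matrix (Fin p) (Fin p) ℝ)
    (v : Fin q → ℝ) :
    v ⬝ᵥ ((Mᵀ * N * M) *ᵥ v) = (M *ᵥ v) ⬝ᵥ (N *ᵥ (M *ᵥ v)) := by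
  rw [← Matrix.mulVec_mulVec, ← Matrix.mulVec_mulVec, Matrix.dotProduct_mulVec,
    Matrix.vecMul_transpose]


end Helpers

/-- Key per-step estimate in Appendix Lemma 2(c): the realized MPC stage cost is bounded
by the decrease of the finite-horizon value function, up to the factor `(1−δ)/α`. -/
theorem mpc_stage_cost_bound {n m : ℕ}
    (A : Matrix (Fin n) (Fin n) ℝ) (B : Matrix (Fin n) (Fin m) ℝ)
    (T : ℕ) (hT : 1 ≤ T) (δ : ℝ) (hδ0 : 0 ≤ δ) (hδ1 : δ < 1)
    (Q : ℕ → Matrix (Fin n) (Fin n) ℝ) (R : ℕ → Matrix (Fin m) (Fin m) ℝ)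
    (hQpd : ∀ t, (Q t).PosDef) (hRpd : ∀ t, (R t).PosDef)
    (hQlow : ∀ t, loewnerLE ((1 - δ) • Q t) (Q (t + 1)))
    (hQhigh : ∀ t, loewnerLE (Q (t + 1)) ((1 + δ) • Q t))
    (hRlow : ∀ t, loewnerLE ((1 - δ) • R t) (R (t + 1)))
    (hRhigh : ∀ t, loewnerLE (R (t + 1)) ((1 + δ) • R t))
    (x : ℕ → Fin n → ℝ) (u : ℕ → Fin m → ℝ)
    (hu : ∀ t, u t = -(((Bᵀ * riccati A B (Q t) (R t) (T - 1) * B + R t)⁻¹ *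
        Bᵀ * riccati A B (Q t) (R t) (T - 1) * A) *ᵥ x t))
    (hx : ∀ t, x (t + 1) = A *ᵥ x t + B *ᵥ u t)
    (α : ℝ) (hα : 1 < α)
    (hαP : ∀ t, loewnerLE (riccati A B (Q t) (R t) T)
      (α • riccati A B (Q t) (R t) (T - 1))) :
    ∀ t : ℕ,
      x t ⬝ᵥ (Q t *ᵥ x t) + u t ⬝ᵥ (R t *ᵥ u t) ≤
        x t ⬝ᵥ (riccati A B (Q t) (R t) T *ᵥ x t) -
          ((1 - δ) / α) *
            (x (t + 1) ⬝ᵥ (riccati A B (Q (t + 1)) (R (t + 1)) T *ᵥ x (t + 1))) := by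
  intro t
  have hk : T - 1 + 1 = T := Nat.sub_add_cancel hT
  have h1δ : (0:ℝ) < 1 + δ := by linarith
  have hPt : (riccati A B (Q t) (R t) (T - 1)).PosSemidef :=
    riccati_psd A B (hQpd t).posSemidef (hRpd t) (T - 1)
  have hut := hu t
  have hdp : riccati A B (Q t) (R t) T =
      Q t + ((Bᵀ * riccati A B (Q t) (R t) (T - 1) * B + R t)⁻¹ *
          Bᵀ * riccati A B (Q t) (R t) (T - 1) * A)ᵀ * R t *
          ((Bᵀ * riccati A B (Q t) (R t) (T - 1) * B + R t)⁻¹ *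
          Bᵀ * riccati A B (Q t) (R t) (T - 1) * A) +
        (A - B * ((Bᵀ * riccati A B (Q t) (R t) (T - 1) * B + R t)⁻¹ *
          Bᵀ * riccati A B (Q t) (R t) (T - 1) * A))ᵀ * riccati A B (Q t) (R t) (T - 1) *
        (A - B * ((Bᵀ * riccati A B (Q t) (R t) (T - 1) * B + R t)⁻¹ *
          Bᵀ * riccati A B (Q t) (R t) (T - 1) * A)) := by
    conv_lhs => rw [← hk]
    exact riccati_succ A B (Q t) (R t) hPt (hRpd t)
  have hmono0 := riccati_mono A B (hQpd (t+1)).posSemidef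
    (psd_smul h1δ.le (hQpd t).posSemidef) (hRpd (t+1)) (pd_smul h1δ (hRpd t)) (hQhigh t)
    (hRhigh t) (T - 1)
  rw [riccati_smul A B (hQpd t).posSemidef (hRpd t) h1δ (T - 1)] at hmono0
  -- hmono0 : loewnerLE (riccati A B (Q (t+1)) (R (t+1)) (T-1)) ((1+δ) • riccati A B (Q t) (R t) (T-1))
  have hstep : loewnerLE ((1 - δ) • riccati A B (Q (t+1)) (R (t+1)) (T - 1))
      (riccati A B (Q t) (R t) (T - 1)) := by
    refine loewner_trans (loewner_smul hmono0 (by linarith)) ?_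
    rw [smul_smul]
    unfold loewnerLE
    rw [show riccati A B (Q t) (R t) (T - 1) -
        ((1 - δ) * (1 + δ)) • riccati A B (Q t) (R t) (T - 1) =
        (1 - (1 - δ) * (1 + δ)) • riccati A B (Q t) (R t) (T - 1) by
      rw [sub_smul, one_smul]]
    exact psd_smul (by nlinarith) hPt
  have hxt1 : x (t + 1) = (A - B * ((Bᵀ * riccati A B (Q t) (R t) (T - 1) * B + R t)⁻¹ *
      Bᵀ * riccati A B (Q t) (R t) (T - 1) * A)) *ᵥ x t := by
    rw [hx t, hut, Matrix.sub_mulVec, Matrix.mulVec_neg, Matrix.mulVec_mulVec, sub_eq_add_neg]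
  have hq1 : u t ⬝ᵥ (R t *ᵥ u t) = x t ⬝ᵥ
      ((((Bᵀ * riccati A B (Q t) (R t) (T - 1) * B + R t)⁻¹ *
          Bᵀ * riccati A B (Q t) (R t) (T - 1) * A)ᵀ * R t *
        ((Bᵀ * riccati A B (Q t) (R t) (T - 1) * B + R t)⁻¹ *
          Bᵀ * riccati A B (Q t) (R t) (T - 1) * A)) *ᵥ x t) := by
    rw [quad_conj, hut, Matrix.mulVec_neg, dotProduct_neg, neg_dotProduct, neg_neg]
  have hsplit : x t ⬝ᵥ (riccati A B (Q t) (R t) T *ᵥ x t)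
      = x t ⬝ᵥ (Q t *ᵥ x t) + u t ⬝ᵥ (R t *ᵥ u t) +
        x (t + 1) ⬝ᵥ (riccati A B (Q t) (R t) (T - 1) *ᵥ x (t + 1)) := by
    rw [hdp, Matrix.add_mulVec, Matrix.add_mulVec, dotProduct_add, dotProduct_add, hq1, hxt1,
      quad_conj, quad_conj]
  have hq2 : (1 - δ) * (x (t+1) ⬝ᵥ (riccati A B (Q (t+1)) (R (t+1)) (T - 1) *ᵥ x (t+1))) ≤
      x (t+1) ⬝ᵥ (riccati A B (Q t) (R t) (T - 1) *ᵥ x (t+1)) := by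
    have := loewner_quad hstep (x (t+1))
    rwa [smul_mulVec, dotProduct_smul, smul_eq_mul] at this
  have hq3 : x (t+1) ⬝ᵥ (riccati A B (Q (t+1)) (R (t+1)) T *ᵥ x (t+1)) ≤
      α * (x (t+1) ⬝ᵥ (riccati A B (Q (t+1)) (R (t+1)) (T - 1) *ᵥ x (t+1))) := by
    have := loewner_quad (hαP (t+1)) (x (t+1))
    rwa [smul_mulVec, dotProduct_smul, smul_eq_mul] at this
  have hα0 : (0:ℝ) < α := lt_trans one_pos hα
  have hfrac : (0:ℝ) ≤ (1 - δ) / α := div_nonneg (by linarith) hα0.le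
  have hkey : ((1 - δ) / α) *
      (x (t+1) ⬝ᵥ (riccati A B (Q (t+1)) (R (t+1)) T *ᵥ x (t+1))) ≤
      x (t+1) ⬝ᵥ (riccati A B (Q t) (R t) (T - 1) *ᵥ x (t+1)) := by
    calc ((1 - δ) / α) * (x (t+1) ⬝ᵥ (riccati A B (Q (t+1)) (R (t+1)) T *ᵥ x (t+1)))
        ≤ ((1 - δ) / α) *
          (α * (x (t+1) ⬝ᵥ (riccati A B (Q (t+1)) (R (t+1)) (T - 1) *ᵥ x (t+1)))) :=
          mul_le_mul_of_nonneg_left hq3 hfrac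
      _ = (1 - δ) * (x (t+1) ⬝ᵥ (riccati A B (Q (t+1)) (R (t+1)) (T - 1) *ᵥ x (t+1))) := by
          field_simp
      _ ≤ _ := hq2
  linarith [hsplit, hkey]
end

section
/- Consider the time-varying MPC setup: fix real matrices A (n×n), B (n×m), a horizon T ≥ 1, a real δ ∈ [0,1), and sequences (Q_t)_{t∈ℕ} of symmetric positive definite n×n matrices and (R_t)_{t∈ℕ} of symmetric positive definite m×m matrices satisfying (1−δ)Q_t ⪯ Q_{t+1} ⪯ (1+δ)Q_t and (1−δ)R_t ⪯ R_{t+1} ⪯ (1+δ)R_t for all t. For weights (Q,R) let P_k(Q,R) be the Riccati iterates with P_0 = 0 and P_{k+1} = AᵀP_kA − AᵀP_kB(BᵀP_kB+R)⁻¹BᵀP_kA + Q, and let the MPC closed-loop trajectory from x_0 be x_{t+1} = Ax_t + Bû_t with û_t = −(BᵀP_{T−1}(Q_t,R_t)B+R_t)⁻¹BᵀP_{T−1}(Q_t,R_t)A x_t. Suppose ρ ∈ (0,1) satisfies ρ·P_T(Q_t,R_t) ⪯ Q_t for all t, α > 1 satisfies P_T(Q_t,R_t) ⪯ α·P_{T−1}(Q_t,R_t)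 for all t, and that γ = (1−ρ)α/(1−δ) < 1. Then the total realized MPC cost is finite and satisfies ∑_{t=0}^{∞} (x_tᵀQ_tx_t + û_tᵀR_tû_t) ≤ (ρ/(1−γ)) · x_0ᵀP_T(Q_0,R_0)x_0; in particular the series of (nonnegative) stage costs converges. -/
open Matrix

namespace MPCAux

lemma loewner_qf {p : ℕ} {X Y : Matrix (Fin p) (Fin p) ℝ} (h : loewnerLE X Y) (v : Fin p → ℝ) :
    v ⬝ᵥ (X *ᵥ v) ≤ v ⬝ᵥ (Y *ᵥ v) := by
  have := h.dotProduct_mulVec_nonneg v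
  simp only [star_trivial, Matrix.sub_mulVec, dotProduct_sub] at this
  linarith


lemma dot_tr {p q : ℕ} (C : Matrix (Fin p) (Fin q) ℝ) (v : Fin q → ℝ) (w : Fin p → ℝ) :
    v ⬝ᵥ (Cᵀ *ᵥ w) = (C *ᵥ v) ⬝ᵥ w := by
  rw [dotProduct_mulVec, vecMul_transpose]

lemma dot_symm {p : ℕ} {P : Matrix (Fin p) (Fin p) ℝ} (hP : Pᵀ = P) (v w : Fin p → ℝ) :
    v ⬝ᵥ (P *ᵥ w) = w ⬝ᵥ (P *ᵥ v) := by
  conv_lhs => rw [← hP]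
  rw [dot_tr, dotProduct_comm]

variable {n m : ℕ} (A : Matrix (Fin n) (Fin n) ℝ) (B : Matrix (Fin n) (Fin m) ℝ)

lemma bellman_eq (P Q : Matrix (Fin n) (Fin n) ℝ) (R : Matrix (Fin m) (Fin m) ℝ)
    (hP : Pᵀ = P) (hMd : IsUnit (Bᵀ * P * B + R).det)
    (x : Fin n → ℝ) (u : Fin m → ℝ) (z : Fin n → ℝ)
    (hu : u = -(((Bᵀ * P * B + R)⁻¹ * Bᵀ * P * A) *ᵥ x))
    (hz : z = A *ᵥ x + B *ᵥ u) :
    x ⬝ᵥ ((Aᵀ * P * A - Aᵀ * P * B * (Bᵀ * P * B + R)⁻¹ * Bᵀ * P * A + Q) *ᵥ x)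
      = x ⬝ᵥ (Q *ᵥ x) + u ⬝ᵥ (R *ᵥ u) + z ⬝ᵥ (P *ᵥ z) := by
  set M := Bᵀ * P * B + R with hM
  set a := A *ᵥ x with ha
  set y := P *ᵥ a with hy
  set w := M⁻¹ *ᵥ (Bᵀ *ᵥ y) with hw
  have hu' : u = -w := by
    rw [hu, hw, hy, ha]
    simp only [Matrix.mulVec_mulVec, Matrix.mul_assoc]
  have hMw : M *ᵥ w = Bᵀ *ᵥ y := by
    rw [hw, Matrix.mulVec_mulVec, Matrix.mul_nonsing_inv _ hMd, Matrix.one_mulVec]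
  have t1 : x ⬝ᵥ ((Aᵀ * P * A) *ᵥ x) = a ⬝ᵥ y := by
    rw [Matrix.mul_assoc, ← Matrix.mulVec_mulVec, dot_tr, ← Matrix.mulVec_mulVec, ← ha, ← hy]
  have t2 : x ⬝ᵥ ((Aᵀ * P * B * M⁻¹ * Bᵀ * P * A) *ᵥ x) = w ⬝ᵥ (Bᵀ *ᵥ y) := by
    have e : (Aᵀ * P * B * M⁻¹ * Bᵀ * P * A) *ᵥ x = Aᵀ *ᵥ (P *ᵥ (B *ᵥ w)) := by
      rw [hw, hy, ha]
      simp only [Matrix.mulVec_mulVec, Matrix.mul_assoc]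
    rw [e, dot_tr, ← ha, dot_symm hP, ← hy, ← dot_tr]
  have hL : x ⬝ᵥ ((Aᵀ * P * A - Aᵀ * P * B * M⁻¹ * Bᵀ * P * A + Q) *ᵥ x)
      = a ⬝ᵥ y - w ⬝ᵥ (Bᵀ *ᵥ y) + x ⬝ᵥ (Q *ᵥ x) := by
    rw [Matrix.add_mulVec, Matrix.sub_mulVec, dotProduct_add, dotProduct_sub, t1, t2]
  have r1 : u ⬝ᵥ (R *ᵥ u) = w ⬝ᵥ (R *ᵥ w) := by
    rw [hu', Matrix.mulVec_neg, neg_dotProduct, dotProduct_neg, neg_neg]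
  have hz' : z = a + -(B *ᵥ w) := by rw [hz, hu', Matrix.mulVec_neg]
  have q1 : a ⬝ᵥ (P *ᵥ (B *ᵥ w)) = (B *ᵥ w) ⬝ᵥ y := by rw [dot_symm hP, ← hy]
  have q2 : (B *ᵥ w) ⬝ᵥ (P *ᵥ (B *ᵥ w)) = w ⬝ᵥ ((Bᵀ * P * B) *ᵥ w) := by
    rw [← dot_tr]
    simp only [Matrix.mulVec_mulVec, Matrix.mul_assoc]
  have r2 : z ⬝ᵥ (P *ᵥ z)
      = a ⬝ᵥ y - a ⬝ᵥ (P *ᵥ (B *ᵥ w)) - a ⬝ᵥ (P *ᵥ (B *ᵥ w)) + w ⬝ᵥ ((Bᵀ * P * B) *ᵥ w) := by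
    rw [hz', Matrix.mulVec_add, Matrix.mulVec_neg, dotProduct_add, add_dotProduct,
      add_dotProduct, dotProduct_neg, dotProduct_neg, neg_dotProduct, neg_dotProduct,
      neg_neg, ← hy, q2, dot_symm hP (B *ᵥ w) a]
    ring
  have key : w ⬝ᵥ ((Bᵀ * P * B) *ᵥ w) + w ⬝ᵥ (R *ᵥ w) = w ⬝ᵥ (Bᵀ *ᵥ y) := by
    rw [← dotProduct_add, ← Matrix.add_mulVec, ← hM, hMw]
  have comm : w ⬝ᵥ (Bᵀ *ᵥ y) = (B *ᵥ w) ⬝ᵥ y := dot_tr B w y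
  rw [hL, r1, r2]
  linarith [key, comm]


lemma bellman_le (P Q : Matrix (Fin n) (Fin n) ℝ) (R : Matrix (Fin m) (Fin m) ℝ)
    (hP : Pᵀ = P) (hMd : IsUnit (Bᵀ * P * B + R).det)
    (hMs : (Bᵀ * P * B + R)ᵀ = Bᵀ * P * B + R)
    (hMpsd : (Bᵀ * P * B + R).PosSemidef)
    (x : Fin n → ℝ) (u : Fin m → ℝ) (z : Fin n → ℝ)
    (hz : z = A *ᵥ x + B *ᵥ u) :
    x ⬝ᵥ ((Aᵀ * P * A - Aᵀ * P * B * (Bᵀ * P * B + R)⁻¹ * Bᵀ * P * A + Q) *ᵥ x)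
      ≤ x ⬝ᵥ (Q *ᵥ x) + u ⬝ᵥ (R *ᵥ u) + z ⬝ᵥ (P *ᵥ z) := by
  set M := Bᵀ * P * B + R with hM
  set a := A *ᵥ x with ha
  set y := P *ᵥ a with hy
  set w := M⁻¹ *ᵥ (Bᵀ *ᵥ y) with hw
  have hMw : M *ᵥ w = Bᵀ *ᵥ y := by
    rw [hw, Matrix.mulVec_mulVec, Matrix.mul_nonsing_inv _ hMd, Matrix.one_mulVec]
  have t1 : x ⬝ᵥ ((Aᵀ * P * A) *ᵥ x) = a ⬝ᵥ y := by
    rw [Matrix.mul_assoc, ← Matrix.mulVec_mulVec, dot_tr, ← Matrix.mulVec_mulVec, ← ha, ← hy]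
  have t2 : x ⬝ᵥ ((Aᵀ * P * B * M⁻¹ * Bᵀ * P * A) *ᵥ x) = w ⬝ᵥ (Bᵀ *ᵥ y) := by
    have e : (Aᵀ * P * B * M⁻¹ * Bᵀ * P * A) *ᵥ x = Aᵀ *ᵥ (P *ᵥ (B *ᵥ w)) := by
      rw [hw, hy, ha]
      simp only [Matrix.mulVec_mulVec, Matrix.mul_assoc]
    rw [e, dot_tr, ← ha, dot_symm hP, ← hy, ← dot_tr]
  have hL : x ⬝ᵥ ((Aᵀ * P * A - Aᵀ * P * B * M⁻¹ * Bᵀ * P * A + Q) *ᵥ x)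
      = a ⬝ᵥ y - w ⬝ᵥ (Bᵀ *ᵥ y) + x ⬝ᵥ (Q *ᵥ x) := by
    rw [Matrix.add_mulVec, Matrix.sub_mulVec, dotProduct_add, dotProduct_sub, t1, t2]
  have q2 : (B *ᵥ u) ⬝ᵥ (P *ᵥ (B *ᵥ u)) = u ⬝ᵥ ((Bᵀ * P * B) *ᵥ u) := by
    rw [← dot_tr]
    simp only [Matrix.mulVec_mulVec, Matrix.mul_assoc]
  have r2 : z ⬝ᵥ (P *ᵥ z)
      = a ⬝ᵥ y + a ⬝ᵥ (P *ᵥ (B *ᵥ u)) + a ⬝ᵥ (P *ᵥ (B *ᵥ u)) + u ⬝ᵥ ((Bᵀ * P * B) *ᵥ u) := by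
    rw [hz, Matrix.mulVec_add, dotProduct_add, add_dotProduct, add_dotProduct,
      ← hy, q2, dot_symm hP (B *ᵥ u) a]
    ring
  have q3 : a ⬝ᵥ (P *ᵥ (B *ᵥ u)) = u ⬝ᵥ (M *ᵥ w) := by
    rw [dot_symm hP, ← hy, ← dot_tr, hMw]
  have keyu : u ⬝ᵥ ((Bᵀ * P * B) *ᵥ u) + u ⬝ᵥ (R *ᵥ u) = u ⬝ᵥ (M *ᵥ u) := by
    rw [← dotProduct_add, ← Matrix.add_mulVec]
  have keyw : w ⬝ᵥ (Bᵀ *ᵥ y) = w ⬝ᵥ (M *ᵥ w) := by rw [hMw]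
  have hsym : w ⬝ᵥ (M *ᵥ u) = u ⬝ᵥ (M *ᵥ w) := dot_symm hMs w u
  have pos : 0 ≤ (u + w) ⬝ᵥ (M *ᵥ (u + w)) := by
    have := hMpsd.dotProduct_mulVec_nonneg (u + w); simpa using this
  have expand : (u + w) ⬝ᵥ (M *ᵥ (u + w))
      = u ⬝ᵥ (M *ᵥ u) + u ⬝ᵥ (M *ᵥ w) + w ⬝ᵥ (M *ᵥ u) + w ⬝ᵥ (M *ᵥ w) := by
    rw [Matrix.mulVec_add, dotProduct_add, add_dotProduct, add_dotProduct]
    ring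
  rw [hL, r2]
  linarith [pos, expand, hsym, keyu, keyw, q3]

lemma M_posdef {P : Matrix (Fin n) (Fin n) ℝ} {R : Matrix (Fin m) (Fin m) ℝ}
    (hP : P.PosSemidef) (hR : R.PosDef) : (Bᵀ * P * B + R).PosDef := by
  have h1 : (Bᵀ * P * B).PosSemidef := by
    have := hP.conjTranspose_mul_mul_same B
    rwa [conjTranspose_eq_transpose_of_trivial] at this
  exact Matrix.PosDef.posSemidef_add h1 hR

lemma M_symm {P : Matrix (Fin n) (Fin n) ℝ} {R : Matrix (Fin m) (Fin m) ℝ}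
    (hP : Pᵀ = P) (hR : Rᵀ = R) : (Bᵀ * P * B + R)ᵀ = Bᵀ * P * B + R := by
  rw [transpose_add, transpose_mul, transpose_mul, transpose_transpose, hP, hR,
    Matrix.mul_assoc]

lemma herm_tr {p : ℕ} {P : Matrix (Fin p) (Fin p) ℝ} (h : P.IsHermitian) : Pᵀ = P := by
  rw [← conjTranspose_eq_transpose_of_trivial]; exact h

lemma psd_qf {p : ℕ} {P : Matrix (Fin p) (Fin p) ℝ} (h : P.PosSemidef) (v : Fin p → ℝ) :
    0 ≤ v ⬝ᵥ (P *ᵥ v) := by simpa using h.dotProduct_mulVec_nonneg v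


lemma riccati_posSemidef (Q : Matrix (Fin n) (Fin n) ℝ) (R : Matrix (Fin m) (Fin m) ℝ)
    (hQ : Q.PosSemidef) (hR : R.PosDef) (k : ℕ) : (riccati A B Q R k).PosSemidef := by
  induction k with
  | zero => simpa [riccati] using Matrix.PosSemidef.zero
  | succ k ih =>
    set P := riccati A B Q R k with hPdef
    have hPt : Pᵀ = P := herm_tr ih.1
    have hMpd : (Bᵀ * P * B + R).PosDef := M_posdef B ih hR
    have hMd : IsUnit (Bᵀ * P * B + R).det := hMpd.det_pos.ne'.isUnit
    have hMs : (Bᵀ * P * B + R)ᵀ = Bᵀ * P * B + R := M_symm B hPt (herm_tr hR.1)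
    refine Matrix.PosSemidef.of_dotProduct_mulVec_nonneg ?_ ?_
    · show _ᴴ = _
      rw [conjTranspose_eq_transpose_of_trivial]
      show (Aᵀ * P * A - Aᵀ * P * B * (Bᵀ * P * B + R)⁻¹ * Bᵀ * P * A + Q)ᵀ
        = Aᵀ * P * A - Aᵀ * P * B * (Bᵀ * P * B + R)⁻¹ * Bᵀ * P * A + Q
      rw [transpose_add, transpose_sub]
      simp only [transpose_add, transpose_mul, transpose_transpose,
        Matrix.transpose_nonsing_inv, hPt, herm_tr hQ.1, herm_tr hR.1, Matrix.mul_assoc]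
    · intro v
      rw [star_trivial]
      have hb := bellman_eq A B P Q R hPt hMd v
        (-(((Bᵀ * P * B + R)⁻¹ * Bᵀ * P * A) *ᵥ v))
        (A *ᵥ v + B *ᵥ -(((Bᵀ * P * B + R)⁻¹ * Bᵀ * P * A) *ᵥ v)) rfl rfl
      show 0 ≤ v ⬝ᵥ ((Aᵀ * P * A - Aᵀ * P * B * (Bᵀ * P * B + R)⁻¹ * Bᵀ * P * A + Q) *ᵥ v)
      rw [hb]
      exact add_nonneg (add_nonneg (psd_qf hQ v) (psd_qf hR.posSemidef _)) (psd_qf ih _)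

lemma riccati_qf_mono (Q Q' : Matrix (Fin n) (Fin n) ℝ) (R R' : Matrix (Fin m) (Fin m) ℝ)
    (hQ : Q.PosSemidef) (hR : R.PosDef) (hQ' : Q'.PosSemidef) (hR' : R'.PosDef) (c : ℝ)
    (hcQ : ∀ v, v ⬝ᵥ (Q' *ᵥ v) ≤ c * (v ⬝ᵥ (Q *ᵥ v)))
    (hcR : ∀ v, v ⬝ᵥ (R' *ᵥ v) ≤ c * (v ⬝ᵥ (R *ᵥ v))) :
    ∀ k v, v ⬝ᵥ (riccati A B Q' R' k *ᵥ v) ≤ c * (v ⬝ᵥ (riccati A B Q R k *ᵥ v)) := by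
  intro k
  induction k with
  | zero => intro v; simp [riccati]
  | succ k ih =>
    intro v
    set P := riccati A B Q R k with hPdef
    set P' := riccati A B Q' R' k with hP'def
    have hpsd : P.PosSemidef := riccati_posSemidef A B Q R hQ hR k
    have hpsd' : P'.PosSemidef := riccati_posSemidef A B Q' R' hQ' hR' k
    have hPt : Pᵀ = P := herm_tr hpsd.1
    have hP't : P'ᵀ = P' := herm_tr hpsd'.1
    have hMpd : (Bᵀ * P * B + R).PosDef := M_posdef B hpsd hR
    have hMpd' : (Bᵀ * P' * B + R').PosDef := M_posdef B hpsd' hR'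
    set u := -(((Bᵀ * P * B + R)⁻¹ * Bᵀ * P * A) *ᵥ v) with hu
    set z := A *ᵥ v + B *ᵥ u with hz
    have heq := bellman_eq A B P Q R hPt hMpd.det_pos.ne'.isUnit v u z hu hz
    have hle := bellman_le A B P' Q' R' hP't hMpd'.det_pos.ne'.isUnit
      (M_symm B hP't (herm_tr hR'.1)) hMpd'.posSemidef v u z hz
    show v ⬝ᵥ ((Aᵀ * P' * A - Aᵀ * P' * B * (Bᵀ * P' * B + R')⁻¹ * Bᵀ * P' * A + Q') *ᵥ v)
      ≤ c * (v ⬝ᵥ ((Aᵀ * P * A - Aᵀ * P * B * (Bᵀ * P * B + R)⁻¹ * Bᵀ * P * A + Q) *ᵥ v))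
    rw [heq]
    have h1 := hcQ v
    have h2 := hcR u
    have h3 := ih z
    calc v ⬝ᵥ ((Aᵀ * P' * A - Aᵀ * P' * B * (Bᵀ * P' * B + R')⁻¹ * Bᵀ * P' * A + Q') *ᵥ v)
        ≤ v ⬝ᵥ (Q' *ᵥ v) + u ⬝ᵥ (R' *ᵥ u) + z ⬝ᵥ (P' *ᵥ z) := hle
      _ ≤ c * (v ⬝ᵥ (Q *ᵥ v)) + c * (u ⬝ᵥ (R *ᵥ u)) + c * (z ⬝ᵥ (P *ᵥ z)) := by
          exact add_le_add (add_le_add h1 h2) h3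
      _ = c * (v ⬝ᵥ (Q *ᵥ v) + u ⬝ᵥ (R *ᵥ u) + z ⬝ᵥ (P *ᵥ z)) := by ring

end MPCAux

open MPCAux

/-- Appendix Lemma 2(c), second inequality: the total realized MPC cost is finite and
bounded by `(ρ/(1−γ))·x₀ᵀP_T(Q₀,R₀)x₀`. -/
theorem mpc_total_cost_bound {n m : ℕ}
    (A : Matrix (Fin n) (Fin n) ℝ) (B : Matrix (Fin n) (Fin m) ℝ)
    (T : ℕ) (hT : 1 ≤ T) (δ : ℝ) (hδ0 : 0 ≤ δ) (hδ1 : δ < 1)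
    (Q : ℕ → Matrix (Fin n) (Fin n) ℝ) (R : ℕ → Matrix (Fin m) (Fin m) ℝ)
    (hQpd : ∀ t, (Q t).PosDef) (hRpd : ∀ t, (R t).PosDef)
    (hQlow : ∀ t, loewnerLE ((1 - δ) • Q t) (Q (t + 1)))
    (hQhigh : ∀ t, loewnerLE (Q (t + 1)) ((1 + δ) • Q t))
    (hRlow : ∀ t, loewnerLE ((1 - δ) • R t) (R (t + 1)))
    (hRhigh : ∀ t, loewnerLE (R (t + 1)) ((1 + δ) • R t))
    (x : ℕ → Fin n → ℝ) (u : ℕ → Fin m → ℝ)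
    (hu : ∀ t, u t = -(((Bᵀ * riccati A B (Q t) (R t) (T - 1) * B + R t)⁻¹ *
        Bᵀ * riccati A B (Q t) (R t) (T - 1) * A) *ᵥ x t))
    (hx : ∀ t, x (t + 1) = A *ᵥ x t + B *ᵥ u t)
    (ρ : ℝ) (hρ0 : 0 < ρ) (hρ1 : ρ < 1)
    (hρP : ∀ t, loewnerLE (ρ • riccati A B (Q t) (R t) T) (Q t))
    (α : ℝ) (hα : 1 < α)
    (hαP : ∀ t, loewnerLE (riccati A B (Q t) (R t) T)
      (α • riccati A B (Q t) (R t) (T - 1)))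
    (γ : ℝ) (hγ : γ = (1 - ρ) * α / (1 - δ)) (hγ1 : γ < 1) :
    Summable (fun t : ℕ => x t ⬝ᵥ (Q t *ᵥ x t) + u t ⬝ᵥ (R t *ᵥ u t)) ∧
    ∑' t : ℕ, (x t ⬝ᵥ (Q t *ᵥ x t) + u t ⬝ᵥ (R t *ᵥ u t)) ≤
      (ρ / (1 - γ)) * (x 0 ⬝ᵥ (riccati A B (Q 0) (R 0) T *ᵥ x 0)) := by
  obtain ⟨k, rfl⟩ : ∃ k, T = k + 1 := ⟨T - 1, by omega⟩
  simp only [Nat.add_sub_cancel] at hu hαP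
  have h1δ : (0:ℝ) < 1 - δ := by linarith
  -- abbreviations
  set f : ℕ → ℝ := fun t => x t ⬝ᵥ (Q t *ᵥ x t) + u t ⬝ᵥ (R t *ᵥ u t) with hf
  let P : ℕ → Matrix (Fin n) (Fin n) ℝ := fun t => riccati A B (Q t) (R t) (k + 1)
  let Pm : ℕ → Matrix (Fin n) (Fin n) ℝ := fun t => riccati A B (Q t) (R t) k
  let W : ℕ → ℝ := fun t => x t ⬝ᵥ (P t *ᵥ x t)
  let Nq : ℕ → ℝ := fun t => x (t + 1) ⬝ᵥ (Pm t *ᵥ x (t + 1))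
  have hPmpsd : ∀ t, (Pm t).PosSemidef := fun t =>
    riccati_posSemidef A B (Q t) (R t) (hQpd t).posSemidef (hRpd t) k
  have hPpsd : ∀ t, (P t).PosSemidef := fun t =>
    riccati_posSemidef A B (Q t) (R t) (hQpd t).posSemidef (hRpd t) (k + 1)
  have hMd : ∀ t, IsUnit (Bᵀ * Pm t * B + R t).det := fun t =>
    (M_posdef B (hPmpsd t) (hRpd t)).det_pos.ne'.isUnit
  have hf_nonneg : ∀ t, 0 ≤ f t := fun t =>
    add_nonneg (psd_qf (hQpd t).posSemidef _) (psd_qf (hRpd t).posSemidef _)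
  have hW_nonneg : ∀ t, 0 ≤ W t := fun t => psd_qf (hPpsd t) _
  have hN_nonneg : ∀ t, 0 ≤ Nq t := fun t => psd_qf (hPmpsd t) _
  -- Bellman identity along the trajectory
  have hWeq : ∀ t, W t = f t + Nq t := by
    intro t
    have hb := bellman_eq A B (Pm t) (Q t) (R t) (herm_tr (hPmpsd t).1) (hMd t)
      (x t) (u t) (x (t + 1)) (hu t) (hx t)
    show x t ⬝ᵥ (riccati A B (Q t) (R t) (k + 1) *ᵥ x t) = _
    simp only [riccati]
    exact hb
  -- lower bound on stage cost
  have hρW : ∀ t, ρ * W t ≤ x t ⬝ᵥ (Q t *ᵥ x t) := by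
    intro t
    have h := loewner_qf (hρP t) (x t)
    rwa [Matrix.smul_mulVec, dotProduct_smul, smul_eq_mul] at h
  -- horizon shortening
  have hαN : ∀ t, x (t + 1) ⬝ᵥ (P t *ᵥ x (t + 1)) ≤ α * Nq t := by
    intro t
    have h := loewner_qf (hαP t) (x (t + 1))
    rwa [Matrix.smul_mulVec, dotProduct_smul, smul_eq_mul] at h
  -- slow variation
  have hmono : ∀ t, W (t + 1) ≤ (1 + δ) * (x (t + 1) ⬝ᵥ (P t *ᵥ x (t + 1))) := by
    intro t
    refine riccati_qf_mono A B (Q t) (Q (t + 1)) (R t) (R (t + 1))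
      (hQpd t).posSemidef (hRpd t) (hQpd (t + 1)).posSemidef (hRpd (t + 1)) (1 + δ)
      ?_ ?_ (k + 1) (x (t + 1))
    · intro v
      have h := loewner_qf (hQhigh t) v
      rwa [Matrix.smul_mulVec, dotProduct_smul, smul_eq_mul] at h
    · intro v
      have h := loewner_qf (hRhigh t) v
      rwa [Matrix.smul_mulVec, dotProduct_smul, smul_eq_mul] at h
  -- constants
  set β : ℝ := α * (1 + δ) with hβdef
  set γ' : ℝ := (1 - ρ) * β with hγ'def
  have hβ1 : 1 < β := by nlinarith
  have hγ'γ : γ' ≤ γ := by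
    rw [hγ, hγ'def, hβdef, le_div_iff₀ h1δ]
    nlinarith [mul_nonneg (mul_nonneg (by linarith : (0:ℝ) ≤ 1 - ρ)
      (by linarith : (0:ℝ) ≤ α)) (sq_nonneg δ)]
  have h1γ' : 0 < 1 - γ' := by linarith
  set K : ℝ := ρ / (1 - γ') with hKdef
  have hK0 : 0 < K := div_pos hρ0 h1γ'
  have hKid : K * (1 - γ') = ρ := div_mul_cancel₀ _ (ne_of_gt h1γ')
  have hK1 : 1 ≤ K := by
    rw [hKdef, le_div_iff₀ h1γ', one_mul]
    nlinarith
  have hKβ1 : 1 ≤ K * β := by nlinarith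
  -- per-step bounds
  have hNW : ∀ t, W (t + 1) ≤ β * Nq t := by
    intro t
    calc W (t + 1) ≤ (1 + δ) * (x (t + 1) ⬝ᵥ (P t *ᵥ x (t + 1))) := hmono t
      _ ≤ (1 + δ) * (α * Nq t) := by
          exact mul_le_mul_of_nonneg_left (hαN t) (by linarith)
      _ = β * Nq t := by rw [hβdef]; ring
  have hNle : ∀ t, Nq t ≤ (1 - ρ) * W t := by
    intro t
    have h1 := hWeq t
    have h2 := hρW t
    have h3 : 0 ≤ u t ⬝ᵥ (R t *ᵥ u t) := psd_qf (hRpd t).posSemidef _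
    have h4 : ρ * W t ≤ f t := by
      rw [hf]; dsimp only; linarith
    linarith
  have hKid2 : K * (1 - (1 - ρ) * β) = ρ := by rw [← hγ'def]; exact hKid
  have s3 : (K * β - 1) * (1 - ρ) = K - 1 := by linear_combination (-1 : ℝ) * hKid2
  have hstep : ∀ t, f t ≤ K * (W t - W (t + 1)) := by
    intro t
    have s1 : K * W (t + 1) ≤ K * (β * Nq t) :=
      mul_le_mul_of_nonneg_left (hNW t) hK0.le
    have s2 : (K * β - 1) * Nq t ≤ (K * β - 1) * ((1 - ρ) * W t) :=
      mul_le_mul_of_nonneg_left (hNle t) (by linarith)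
    have s2' : (K * β - 1) * Nq t ≤ (K - 1) * W t := by
      calc (K * β - 1) * Nq t ≤ (K * β - 1) * ((1 - ρ) * W t) := s2
        _ = ((K * β - 1) * (1 - ρ)) * W t := by ring
        _ = (K - 1) * W t := by rw [s3]
    have e5 : (K * β - 1) * Nq t = K * (β * Nq t) - Nq t := by ring
    have e6 : (K - 1) * W t = K * W t - W t := by ring
    have e7 : K * (W t - W (t + 1)) = K * W t - K * W (t + 1) := by ring
    have hw := hWeq t
    linarith
  -- partial sums
  have hpartial : ∀ Nn : ℕ, ∑ t ∈ Finset.range Nn, f t ≤ K * (W 0 - W Nn) := by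
    intro Nn
    induction Nn with
    | zero => simp
    | succ Nn ih =>
      rw [Finset.sum_range_succ]
      have h1 := hstep Nn
      have e : K * (W 0 - W (Nn + 1)) = K * (W 0 - W Nn) + K * (W Nn - W (Nn + 1)) := by
        ring
      linarith
  have hKle : K ≤ ρ / (1 - γ) := by
    rw [hKdef]
    gcongr
  have hbound : ∀ Nn : ℕ, ∑ t ∈ Finset.range Nn, f t ≤ (ρ / (1 - γ)) * W 0 := by
    intro Nn
    have h1 : K * (W 0 - W Nn) ≤ K * W 0 :=
      mul_le_mul_of_nonneg_left (by linarith [hW_nonneg Nn]) hK0.le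
    have h2 : K * W 0 ≤ (ρ / (1 - γ)) * W 0 :=
      mul_le_mul_of_nonneg_right hKle (hW_nonneg 0)
    linarith [hpartial Nn]
  exact ⟨summable_of_sum_range_le hf_nonneg hbound,
    Real.tsum_le_of_sum_range_le hf_nonneg hbound⟩
end
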